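/- If an inversion sequence e has an occurrence of 1000 at every position in a set T, then simultaneously replacing, for each i in T, the entries e_{i+1}, e_{i+2} by e_i (changing each 1000 occurrence into a 1110 occurrence) yields a well-defined inversion sequence with an occurrence of 1110 at every position of T. -/
import Mathlib


/-- If an inversion sequence `e` (0-indexed: `e i ≤ i`) has an occurrence of 1000
(`e i > e (i+1) = e (i+2) = e (i+3)`) at every position in `T`, then
simultaneously replacing, for each `i ∈ T`, the entries at positions `i+1`, `i+2`
by `e i` yields a well-defined inversion sequence `e'` with an occurrence of 1110
(`e' i = e' (i+1) = e' (i+2) > e' (i+3)`) at every position of `T`. -/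
theorem change_all_1000_to_1110 (n : ℕ) (e : ℕ → ℕ)
    (hinv : ∀ j, j < n → e j ≤ j)
    (T : Set ℕ)
    (hT : ∀ i ∈ T, i + 3 < n ∧
      e (i+1) < e i ∧ e (i+1) = e (i+2) ∧ e (i+2) = e (i+3)) :
    ∃ e' : ℕ → ℕ,
      (∀ i ∈ T, e' (i+1) = e i ∧ e' (i+2) = e i) ∧
      (∀ j, (¬ ∃ i ∈ T, j = i + 1 ∨ j = i + 2) → e' j = e j) ∧
      (∀ j, j < n → e' j ≤ j) ∧
      (∀ i ∈ T, e' i = e' (i+1) ∧ e' (i+1) = e' (i+2) ∧ e' (i+3) < e' (i+2)) := by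
  classical
  -- two distinct elements of T differ by at least 3
  have key : ∀ i ∈ T, ∀ i' ∈ T, i' = i + 1 ∨ i' = i + 2 → False := by
    rintro i hi i' hi' (rfl | rfl)
    · obtain ⟨_, h1, h2, _⟩ := hT i hi
      obtain ⟨_, h1', h2', _⟩ := hT _ hi'
      have hr : e (i+1+1) = e (i+2) := rfl
      omega
    · obtain ⟨_, h1, h2, h3⟩ := hT i hi
      obtain ⟨_, h1', _, _⟩ := hT _ hi'
      have hr : e (i+2+1) = e (i+3) := rfl
      omega
  have uniq : ∀ i ∈ T, ∀ i' ∈ T, ∀ j : ℕ,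
      (j = i + 1 ∨ j = i + 2) → (j = i' + 1 ∨ j = i' + 2) → i = i' := by
    intro i hi i' hi' j h h'
    have hcases : i = i' ∨ i' = i + 1 ∨ i = i' + 1 := by omega
    rcases hcases with h0 | h0 | h0
    · exact h0
    · exact (key i hi i' hi' (Or.inl h0)).elim
    · exact (key i' hi' i hi (Or.inl h0)).elim
  set e' : ℕ → ℕ := fun j =>
    if h : ∃ i ∈ T, j = i + 1 ∨ j = i + 2 then e h.choose else e j with he'
  have heval : ∀ i ∈ T, ∀ j, (j = i + 1 ∨ j = i + 2) → e' j = e i := by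
    intro i hi j hj
    have hex : ∃ i ∈ T, j = i + 1 ∨ j = i + 2 := ⟨i, hi, hj⟩
    simp only [he', dif_pos hex]
    obtain ⟨hi', hj'⟩ := hex.choose_spec
    rw [uniq hex.choose hi' i hi j hj' hj]
  have hnot : ∀ j, (¬ ∃ i ∈ T, j = i + 1 ∨ j = i + 2) → e' j = e j := by
    intro j hj
    simp only [he', dif_neg hj]
  refine ⟨e', fun i hi => ⟨heval i hi _ (Or.inl rfl), heval i hi _ (Or.inr rfl)⟩, hnot,
    ?_, ?_⟩
  · intro j hjn
    by_cases hj : ∃ i ∈ T, j = i + 1 ∨ j = i + 2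
    · obtain ⟨i, hi, hji⟩ := hj
      rw [heval i hi j hji]
      have hn := (hT i hi).1
      have := hinv i (by omega)
      omega
    · rw [hnot j hj]
      exact hinv j hjn
  · intro i hi
    obtain ⟨hn, h1, h2, h3⟩ := hT i hi
    have hei : e' i = e i := by
      apply hnot
      rintro ⟨i', hi', h | h⟩ <;> exact key i' hi' i hi (by omega)
    have hei3 : e' (i+3) = e (i+3) := by
      apply hnot
      rintro ⟨i', hi', h | h⟩
      · have : i' = i + 2 := by omega
        subst this; exact key i hi _ hi' (Or.inr rfl)
      · have : i' = i + 1 := by omega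
        subst this; exact key i hi _ hi' (Or.inl rfl)
    rw [hei, hei3, heval i hi _ (Or.inl rfl), heval i hi _ (Or.inr rfl)]
    omega
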